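/- Let d ≥ 2, ℓ > 0, L ≥ 0, and let ψ : ℝ^{d-1} → ℝ satisfy ψ(x′) ≥ ℓ for all x′ and |ψ(x′) - ψ(y′)| ≤ L|x′ - y′| for all x′, y′. Let σ > 1/2. For f ∈ L^{2,σ}(ℝ^d) and T > 0 define the time average (A_T f)(x₁,x′) = (1/(2T)) ∫_{-T}^{T} f(x₁ + tψ(x′), x′) dt. Then there is a constant C depending only on σ, ℓ and L such that for every f ∈ L^{2,σ}(ℝ^d) and every T ≥ 1, ‖A_T f‖_{L^{2,-σ}(ℝ^d)} ≤ C T^{-1/3} ‖f‖_{L^{2,σ}(ℝ^d)}. In particular A_T converges to 0 — the orthogonal projection onto the flow-invariant functions in L²(ℝ^d) — in the operator norm of bounded operators from L^{2,σ}(ℝ^d) to L^{2,-σ}(ℝ^d) as T → ∞. -/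

import Mathlib

open MeasureTheory Complex Filter Topology
open scoped ENNReal

private lemma aux_cov (φ : ℝ → ℝ≥0∞) (hφ : Measurable φ) (a c : ℝ) (hc : 0 < c) :
    ∫⁻ t, φ (a + t * c) = ENNReal.ofReal c⁻¹ * ∫⁻ s, φ s := by
  have hm : Measurable fun t : ℝ => a + t * c := by fun_prop
  have h1 : Measure.map (fun t : ℝ => a + t * c) volume
      = ENNReal.ofReal c⁻¹ • volume := by
    have he : (fun t : ℝ => a + t * c) = (fun s : ℝ => a + s) ∘ (fun t : ℝ => c * t) := by
      funext t; simp [mul_comm]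
    rw [he, ← Measure.map_map (by fun_prop) (by fun_prop),
      Real.map_volume_mul_left hc.ne', Measure.map_smul,
      map_add_left_eq_self volume a, abs_of_pos (inv_pos.mpr hc)]
  calc ∫⁻ t, φ (a + t * c) = ∫⁻ s, φ s ∂(Measure.map (fun t : ℝ => a + t*c) volume) :=
        (lintegral_map hφ hm).symm
    _ = ENNReal.ofReal c⁻¹ * ∫⁻ s, φ s := by rw [h1, lintegral_smul_measure, smul_eq_mul]

private lemma aux_sqh (a : ℝ≥0∞) : (a ^ (1/2:ℝ))^2 = a := by
  rw [← ENNReal.rpow_natCast (a ^ (1/2:ℝ)) 2, ← ENNReal.rpow_mul]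
  norm_num

private lemma aux_stepB (T : ℝ) (hT : 1 ≤ T) (h : ℝ → ℂ) :
    (‖∫ t in (-T)..T, h t‖₊ : ℝ≥0∞) ≤ ∫⁻ t in Set.Ioc (-T) T, (‖h t‖₊ : ℝ≥0∞) := by
  have hTT : (-T) ≤ T := by linarith
  by_cases hi : IntegrableOn h (Set.Ioc (-T) T)
  · have h1 : ‖∫ t in (-T)..T, h t‖ ≤ ∫ t in Set.Ioc (-T) T, ‖h t‖ := by
      exact (intervalIntegral.norm_integral_le_integral_norm hTT).trans
        (le_of_eq (intervalIntegral.integral_of_le hTT))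
    calc (‖∫ t in (-T)..T, h t‖₊ : ℝ≥0∞) = ENNReal.ofReal ‖∫ t in (-T)..T, h t‖ :=
          (ofReal_norm _).symm
      _ ≤ ENNReal.ofReal (∫ t in Set.Ioc (-T) T, ‖h t‖) := ENNReal.ofReal_le_ofReal h1
      _ = ∫⁻ t in Set.Ioc (-T) T, ENNReal.ofReal ‖h t‖ :=
          ofReal_integral_eq_lintegral_ofReal hi.norm (Eventually.of_forall fun t => norm_nonneg _)
      _ = _ := lintegral_congr fun t => ofReal_norm _
  · rw [intervalIntegral.integral_undef]
    · simp
    · rw [intervalIntegrable_iff_integrableOn_Ioc_of_le hTT]; exact hi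

private lemma aux_fiber (σ : ℝ) {T c : ℝ} (hT : 1 ≤ T) (hc : 0 < c)
    (g : ℝ → ℂ) (hg : Measurable g) (x₁ : ℝ) :
    (∫⁻ t in Set.Ioc (-T) T, (‖g (x₁ + t * c)‖₊ : ℝ≥0∞))
      ≤ ((ENNReal.ofReal c⁻¹) * ∫⁻ s, ENNReal.ofReal ((1+s^2)^(-σ))) ^ (1/2 : ℝ)
        * ((ENNReal.ofReal c⁻¹) * ∫⁻ s, ENNReal.ofReal ((1+s^2)^σ) * (‖g s‖₊ : ℝ≥0∞)^2)
            ^ (1/2 : ℝ) := by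
  have hwpos : ∀ s : ℝ, (0:ℝ) < 1 + s^2 := fun s => by positivity
  set h1 : ℝ → ℝ≥0∞ := fun t => ENNReal.ofReal ((1 + (x₁ + t*c)^2) ^ (-σ/2)) with hh1
  set h2 : ℝ → ℝ≥0∞ := fun t =>
    ENNReal.ofReal ((1 + (x₁ + t*c)^2) ^ (σ/2)) * (‖g (x₁ + t*c)‖₊ : ℝ≥0∞) with hh2
  have hpq : (2:ℝ).HolderConjugate 2 := Real.HolderConjugate.two_two
  have hm1 : Measurable h1 := by fun_prop
  have hm2 : Measurable h2 := by
    rw [hh2]; apply Measurable.fun_mul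
    · fun_prop
    · exact (hg.comp (by fun_prop)).nnnorm.coe_nnreal_ennreal
  have heq : ∀ t, (‖g (x₁ + t * c)‖₊ : ℝ≥0∞) = (h1 * h2) t := by
    intro t
    simp only [hh1, hh2, Pi.mul_apply, ← mul_assoc,
      ← ENNReal.ofReal_mul (Real.rpow_nonneg (hwpos _).le _),
      ← Real.rpow_add (hwpos (x₁ + t*c))]
    rw [show -σ/2 + σ/2 = 0 by ring, Real.rpow_zero, ENNReal.ofReal_one, one_mul]
  have hHold := ENNReal.lintegral_mul_le_Lp_mul_Lq
    (volume.restrict (Set.Ioc (-T) T)) hpq hm1.aemeasurable hm2.aemeasurable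
  have hF1 : (∫⁻ t in Set.Ioc (-T) T, h1 t ^ (2:ℝ))
      ≤ (ENNReal.ofReal c⁻¹) * ∫⁻ s, ENNReal.ofReal ((1+s^2)^(-σ)) := by
    have e1 : ∀ t : ℝ, h1 t ^ (2:ℝ) = ENNReal.ofReal ((1 + (x₁ + t*c)^2) ^ (-σ)) := by
      intro t
      rw [hh1, ENNReal.ofReal_rpow_of_nonneg (Real.rpow_nonneg (hwpos _).le _)
        (by norm_num : (0:ℝ) ≤ 2)]
      congr 1
      rw [← Real.rpow_mul (hwpos _).le]
      congr 1
      ring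
    calc (∫⁻ t in Set.Ioc (-T) T, h1 t ^ (2:ℝ))
        ≤ ∫⁻ t, ENNReal.ofReal ((1 + (x₁ + t*c)^2) ^ (-σ)) := by
          rw [funext e1]; exact setLIntegral_le_lintegral _ _
      _ = _ := aux_cov (fun s => ENNReal.ofReal ((1+s^2)^(-σ))) (by fun_prop) x₁ c hc
  have hF2 : (∫⁻ t in Set.Ioc (-T) T, h2 t ^ (2:ℝ))
      ≤ (ENNReal.ofReal c⁻¹) * ∫⁻ s, ENNReal.ofReal ((1+s^2)^σ) * (‖g s‖₊ : ℝ≥0∞)^2 := by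
    have e2 : ∀ t : ℝ, h2 t ^ (2:ℝ)
        = ENNReal.ofReal ((1 + (x₁ + t*c)^2) ^ σ) * (‖g (x₁ + t*c)‖₊ : ℝ≥0∞)^2 := by
      intro t
      rw [hh2, ENNReal.mul_rpow_of_nonneg _ _ (by norm_num : (0:ℝ) ≤ 2),
        ENNReal.ofReal_rpow_of_nonneg (Real.rpow_nonneg (hwpos _).le _)
          (by norm_num : (0:ℝ) ≤ 2)]
      congr 1
      · congr 1
        rw [← Real.rpow_mul (hwpos _).le]
        congr 1
        ring
      · rw [show (2:ℝ) = ((2:ℕ):ℝ) by norm_num, ENNReal.rpow_natCast]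
    calc (∫⁻ t in Set.Ioc (-T) T, h2 t ^ (2:ℝ))
        ≤ ∫⁻ t, ENNReal.ofReal ((1 + (x₁ + t*c)^2) ^ σ) * (‖g (x₁ + t*c)‖₊ : ℝ≥0∞)^2 := by
          rw [funext e2]; exact setLIntegral_le_lintegral _ _
      _ = _ := by
          have hφ2 : Measurable fun s : ℝ =>
              ENNReal.ofReal ((1+s^2)^σ) * (‖g s‖₊ : ℝ≥0∞)^2 :=
            (by fun_prop : Measurable fun s:ℝ => ENNReal.ofReal ((1+s^2)^σ)).mul
              ((hg.nnnorm.coe_nnreal_ennreal).pow_const 2)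
          exact aux_cov _ hφ2 x₁ c hc
  calc (∫⁻ t in Set.Ioc (-T) T, (‖g (x₁ + t * c)‖₊ : ℝ≥0∞))
      = ∫⁻ t in Set.Ioc (-T) T, (h1 * h2) t := lintegral_congr fun t => heq t
    _ ≤ (∫⁻ t in Set.Ioc (-T) T, h1 t ^ (2:ℝ)) ^ (1/2:ℝ)
        * (∫⁻ t in Set.Ioc (-T) T, h2 t ^ (2:ℝ)) ^ (1/2:ℝ) := hHold
    _ ≤ _ := mul_le_mul' (ENNReal.rpow_le_rpow hF1 (by norm_num))
        (ENNReal.rpow_le_rpow hF2 (by norm_num))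

/-- Let `d ≥ 2`, `ℓ > 0`, `L ≥ 0`, let `ψ : ℝ^{d-1} → ℝ` satisfy `ψ ≥ ℓ` and
be `L`-Lipschitz, and let `σ > 1/2`.  For the time averages
`(A_T f)(x₁,x') = (1/(2T)) ∫_{-T}^{T} f(x₁ + tψ(x'), x') dt` there is a constant `C`
depending only on `σ`, `ℓ` and `L` such that for all `f ∈ L^{2,σ}(ℝ^d)` and all `T ≥ 1`,
`‖A_T f‖_{L^{2,-σ}} ≤ C T^{-1/3} ‖f‖_{L^{2,σ}}` (stated with both sides squared, the left
side as a lower Lebesgue integral); in particular `A_T → 0`, the orthogonal projection onto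
the flow-invariant functions in `L²(ℝ^d)`, in the operator norm from `L^{2,σ}` to `L^{2,-σ}`
as `T → ∞`.  Here `ℝ^d` is modelled as `ℝ × ℝ^{d-1}`, points written `x = (x₁, x')`. -/
theorem stmt_13 (σ ℓ L : ℝ) (hσ : 1/2 < σ) (hℓ : 0 < ℓ) (hL : 0 ≤ L) :
    ∃ C : ℝ, 0 < C ∧
      ∀ (d : ℕ), 2 ≤ d →
      ∀ ψ : EuclideanSpace ℝ (Fin (d-1)) → ℝ, Measurable ψ →
        (∀ x', ℓ ≤ ψ x') →
        (∀ x' y', |ψ x' - ψ y'| ≤ L * dist x' y') →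
      (∀ f : ℝ × EuclideanSpace ℝ (Fin (d-1)) → ℂ, Measurable f →
        Integrable (fun x : ℝ × EuclideanSpace ℝ (Fin (d-1)) => (1 + x.1^2) ^ σ * ‖f x‖^2) →
        ∀ T : ℝ, 1 ≤ T →
          (∫⁻ x : ℝ × EuclideanSpace ℝ (Fin (d-1)),
              ENNReal.ofReal ((1 + x.1^2) ^ (-σ)) *
                (‖(2*T)⁻¹ • ∫ t in (-T)..T, f (x.1 + t * ψ x.2, x.2)‖₊ : ℝ≥0∞) ^ 2
              ∂volume)
            ≤ ENNReal.ofReal ((C * T ^ (-(1/3 : ℝ)) *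
                Real.sqrt (∫ x : ℝ × EuclideanSpace ℝ (Fin (d-1)),
                  (1 + x.1^2) ^ σ * ‖f x‖^2)) ^ 2)) ∧
      -- in particular, uniform (operator-norm) convergence of `A_T` to `0` as `T → ∞`:
      (∀ d : ℕ, 2 ≤ d →
        ∀ ψ : EuclideanSpace ℝ (Fin (d-1)) → ℝ, Measurable ψ →
        (∀ x', ℓ ≤ ψ x') →
        (∀ x' y', |ψ x' - ψ y'| ≤ L * dist x' y') →
        ∀ ε : ℝ, 0 < ε → ∃ T₀ : ℝ, ∀ T : ℝ, T₀ ≤ T →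
          ∀ f : ℝ × EuclideanSpace ℝ (Fin (d-1)) → ℂ, Measurable f →
            Integrable
              (fun x : ℝ × EuclideanSpace ℝ (Fin (d-1)) => (1 + x.1^2) ^ σ * ‖f x‖^2) →
            (∫ x : ℝ × EuclideanSpace ℝ (Fin (d-1)), (1 + x.1^2) ^ σ * ‖f x‖^2) ≤ 1 →
            (∫⁻ x : ℝ × EuclideanSpace ℝ (Fin (d-1)),
                ENNReal.ofReal ((1 + x.1^2) ^ (-σ)) *
                  (‖(2*T)⁻¹ • ∫ t in (-T)..T, f (x.1 + t * ψ x.2, x.2)‖₊ : ℝ≥0∞) ^ 2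
                ∂volume)
              ≤ ENNReal.ofReal (ε ^ 2)) := by
  have hwpos : ∀ s : ℝ, (0:ℝ) < 1 + s^2 := fun s => by positivity
  set Cσ : ℝ := ∫ s : ℝ, (1 + s^2) ^ (-σ) with hCσdef
  have hint : Integrable (fun s : ℝ => (1 + s^2) ^ (-σ)) := by
    have h : ((Module.finrank ℝ ℝ : ℕ) : ℝ) < 2*σ := by
      simp [Module.finrank_self]; linarith
    have h2 := integrable_rpow_neg_one_add_norm_sq (E := ℝ) (μ := volume) h
    refine h2.congr (Eventually.of_forall fun x => ?_)
    have e : (1 + ‖x‖^2 : ℝ) = 1 + x^2 := by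
      simp [Real.norm_eq_abs, sq_abs]
    show (1 + ‖x‖ ^ 2 : ℝ) ^ (-(2 * σ) / 2) = (1 + x ^ 2) ^ (-σ)
    rw [e]
    congr 1
    ring
  have hCσ0 : 0 ≤ Cσ := integral_nonneg fun s => Real.rpow_nonneg (hwpos s).le _
  set C : ℝ := Cσ / (2*ℓ) + 1 with hCdef
  have hC : 0 < C := by positivity
  have hK : (∫⁻ s : ℝ, ENNReal.ofReal ((1+s^2)^(-σ))) = ENNReal.ofReal Cσ :=
    (ofReal_integral_eq_lintegral_ofReal hint
      (Eventually.of_forall fun s => Real.rpow_nonneg (hwpos s).le _)).symm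
  have main : ∀ (d : ℕ), 2 ≤ d →
      ∀ ψ : EuclideanSpace ℝ (Fin (d-1)) → ℝ, Measurable ψ →
        (∀ x', ℓ ≤ ψ x') →
        (∀ x' y', |ψ x' - ψ y'| ≤ L * dist x' y') →
      (∀ f : ℝ × EuclideanSpace ℝ (Fin (d-1)) → ℂ, Measurable f →
        Integrable (fun x : ℝ × EuclideanSpace ℝ (Fin (d-1)) => (1 + x.1^2) ^ σ * ‖f x‖^2) →
        ∀ T : ℝ, 1 ≤ T →
          (∫⁻ x : ℝ × EuclideanSpace ℝ (Fin (d-1)),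
              ENNReal.ofReal ((1 + x.1^2) ^ (-σ)) *
                (‖(2*T)⁻¹ • ∫ t in (-T)..T, f (x.1 + t * ψ x.2, x.2)‖₊ : ℝ≥0∞) ^ 2
              ∂volume)
            ≤ ENNReal.ofReal ((C * T ^ (-(1/3 : ℝ)) *
                Real.sqrt (∫ x : ℝ × EuclideanSpace ℝ (Fin (d-1)),
                  (1 + x.1^2) ^ σ * ‖f x‖^2)) ^ 2)) := by
    intro d hd ψ hψm hψℓ hψL f hf hInt T hT
    have hT0 : (0:ℝ) < T := lt_of_lt_of_le one_pos hT
    set I : ℝ := ∫ x : ℝ × EuclideanSpace ℝ (Fin (d-1)), (1 + x.1^2) ^ σ * ‖f x‖^2 with hIdef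
    have hI : 0 ≤ I := integral_nonneg fun x => by positivity
    set φ : ℝ × EuclideanSpace ℝ (Fin (d-1)) → ℝ≥0∞ :=
      fun p => ENNReal.ofReal ((1+p.1^2)^σ) * (‖f p‖₊ : ℝ≥0∞)^2 with hφdef
    have hφm : Measurable φ :=
      (by fun_prop : Measurable fun p : ℝ × EuclideanSpace ℝ (Fin (d-1)) =>
        ENNReal.ofReal ((1+p.1^2)^σ)).mul ((hf.nnnorm.coe_nnreal_ennreal).pow_const 2)
    set G : EuclideanSpace ℝ (Fin (d-1)) → ℝ≥0∞ :=
      fun x' => ∫⁻ s : ℝ, φ (s, x') with hGdef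
    have hGm : Measurable G := hφm.lintegral_prod_left'
    set D : ℝ≥0∞ := (ENNReal.ofReal ((2*T)⁻¹))^2
        * ((ENNReal.ofReal ℓ⁻¹)^2 * ENNReal.ofReal Cσ) with hDdef
    -- pointwise bound
    have hpoint : ∀ x : ℝ × EuclideanSpace ℝ (Fin (d-1)),
        ENNReal.ofReal ((1 + x.1^2) ^ (-σ)) *
          (‖(2*T)⁻¹ • ∫ t in (-T)..T, f (x.1 + t * ψ x.2, x.2)‖₊ : ℝ≥0∞) ^ 2
        ≤ ENNReal.ofReal ((1 + x.1^2) ^ (-σ)) * (D * G x.2) := by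
      intro x
      have hc : (0:ℝ) < ψ x.2 := lt_of_lt_of_le hℓ (hψℓ x.2)
      have hg : Measurable fun s : ℝ => f (s, x.2) := hf.comp (by fun_prop)
      set v : ℂ := ∫ t in (-T)..T, f (x.1 + t * ψ x.2, x.2) with hv
      have hv1 : (‖(2*T)⁻¹ • v‖₊ : ℝ≥0∞) = ENNReal.ofReal ((2*T)⁻¹) * (‖v‖₊ : ℝ≥0∞) := by
        have he : (‖(2*T)⁻¹‖₊ : ℝ≥0∞) = ENNReal.ofReal ((2*T)⁻¹) := Real.enorm_eq_ofReal (by positivity)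
        rw [nnnorm_smul, ENNReal.coe_mul, he]
      have hv2 : (‖v‖₊ : ℝ≥0∞)
          ≤ ∫⁻ t in Set.Ioc (-T) T, (‖f (x.1 + t * ψ x.2, x.2)‖₊ : ℝ≥0∞) :=
        aux_stepB T hT _
      have hv3 := aux_fiber σ hT hc (fun s => f (s, x.2)) hg x.1
      have hv4 : (‖v‖₊ : ℝ≥0∞)
          ≤ ((ENNReal.ofReal (ψ x.2)⁻¹) * ENNReal.ofReal Cσ) ^ (1/2:ℝ)
            * ((ENNReal.ofReal (ψ x.2)⁻¹) * G x.2) ^ (1/2:ℝ) := by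
        rw [← hK]
        exact le_trans hv2 hv3
      have hinv : ENNReal.ofReal (ψ x.2)⁻¹ ≤ ENNReal.ofReal ℓ⁻¹ :=
        ENNReal.ofReal_le_ofReal (by
          exact inv_anti₀ hℓ (hψℓ x.2))
      calc ENNReal.ofReal ((1 + x.1^2) ^ (-σ)) * (‖(2*T)⁻¹ • v‖₊ : ℝ≥0∞) ^ 2
          = ENNReal.ofReal ((1 + x.1^2) ^ (-σ)) *
              ((ENNReal.ofReal ((2*T)⁻¹))^2 * (‖v‖₊ : ℝ≥0∞)^2) := by
            rw [hv1]; ring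
        _ ≤ ENNReal.ofReal ((1 + x.1^2) ^ (-σ)) *
              ((ENNReal.ofReal ((2*T)⁻¹))^2 *
                (((ENNReal.ofReal (ψ x.2)⁻¹) * ENNReal.ofReal Cσ) ^ (1/2:ℝ)
                  * ((ENNReal.ofReal (ψ x.2)⁻¹) * G x.2) ^ (1/2:ℝ))^2) :=
            mul_le_mul_right (mul_le_mul_right (pow_le_pow_left' hv4 2) _) _
        _ = ENNReal.ofReal ((1 + x.1^2) ^ (-σ)) *
              ((ENNReal.ofReal ((2*T)⁻¹))^2 *
                (((ENNReal.ofReal (ψ x.2)⁻¹) * ENNReal.ofReal Cσ)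
                  * ((ENNReal.ofReal (ψ x.2)⁻¹) * G x.2))) := by
            rw [mul_pow, aux_sqh, aux_sqh]
        _ ≤ ENNReal.ofReal ((1 + x.1^2) ^ (-σ)) *
              ((ENNReal.ofReal ((2*T)⁻¹))^2 *
                (((ENNReal.ofReal ℓ⁻¹) * ENNReal.ofReal Cσ)
                  * ((ENNReal.ofReal ℓ⁻¹) * G x.2))) :=
            mul_le_mul_right (mul_le_mul_right
              (mul_le_mul' (mul_le_mul_left hinv _) (mul_le_mul_left hinv _)) _) _
        _ = ENNReal.ofReal ((1 + x.1^2) ^ (-σ)) * (D * G x.2) := by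
            rw [hDdef]; ring
    have hwm : Measurable fun s : ℝ => ENNReal.ofReal ((1+s^2)^(-σ)) := by fun_prop
    have hGI : (∫⁻ x' : EuclideanSpace ℝ (Fin (d-1)), G x') = ENNReal.ofReal I := by
      have h1 : (∫⁻ x' : EuclideanSpace ℝ (Fin (d-1)), G x')
          = ∫⁻ p : ℝ × EuclideanSpace ℝ (Fin (d-1)), φ p ∂(volume.prod volume) := by
        rw [lintegral_prod_symm φ (by rw [← Measure.volume_eq_prod]; exact hφm.aemeasurable)]
      rw [h1, ← Measure.volume_eq_prod]
      have h2 : ∀ p : ℝ × EuclideanSpace ℝ (Fin (d-1)),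
          φ p = ENNReal.ofReal ((1+p.1^2)^σ * ‖f p‖^2) := by
        intro p
        simp only [hφdef]
        rw [ENNReal.ofReal_mul (Real.rpow_nonneg (hwpos p.1).le _)]
        congr 1
        rw [ENNReal.ofReal_pow (norm_nonneg _), ofReal_norm]; rfl
      rw [lintegral_congr h2]
      exact (ofReal_integral_eq_lintegral_ofReal hInt
        (Eventually.of_forall fun p => by positivity)).symm
    calc (∫⁻ x : ℝ × EuclideanSpace ℝ (Fin (d-1)),
            ENNReal.ofReal ((1 + x.1^2) ^ (-σ)) *
              (‖(2*T)⁻¹ • ∫ t in (-T)..T, f (x.1 + t * ψ x.2, x.2)‖₊ : ℝ≥0∞) ^ 2 ∂volume)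
        ≤ ∫⁻ x : ℝ × EuclideanSpace ℝ (Fin (d-1)),
            ENNReal.ofReal ((1 + x.1^2) ^ (-σ)) * (D * G x.2) ∂volume :=
          lintegral_mono hpoint
      _ = (∫⁻ s : ℝ, ENNReal.ofReal ((1+s^2)^(-σ)))
            * ∫⁻ x' : EuclideanSpace ℝ (Fin (d-1)), D * G x' := by
          rw [Measure.volume_eq_prod]
          exact lintegral_prod_mul hwm.aemeasurable ((hGm.const_mul D).aemeasurable)
      _ = ENNReal.ofReal Cσ * (D * ENNReal.ofReal I) := by
          rw [hK, lintegral_const_mul D hGm, hGI]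
      _ = ENNReal.ofReal (Cσ * ((((2*T)⁻¹)^2 * ((ℓ⁻¹)^2 * Cσ)) * I)) := by
          rw [hDdef, ← ENNReal.ofReal_pow (by positivity), ← ENNReal.ofReal_pow (by positivity),
            ← ENNReal.ofReal_mul (by positivity), ← ENNReal.ofReal_mul (by positivity),
            ← ENNReal.ofReal_mul (by positivity), ← ENNReal.ofReal_mul (by positivity)]
      _ ≤ ENNReal.ofReal ((C * T ^ (-(1/3 : ℝ)) * Real.sqrt I) ^ 2) := by
          apply ENNReal.ofReal_le_ofReal
          have hTpow : T⁻¹ ≤ T ^ (-(1/3:ℝ)) := by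
            rw [← Real.rpow_neg_one]
            exact Real.rpow_le_rpow_of_exponent_le hT (by norm_num)
          have h1 : Cσ / (2*ℓ) * T⁻¹ ≤ C * T ^ (-(1/3:ℝ)) :=
            mul_le_mul (by rw [hCdef]; linarith) hTpow (by positivity) hC.le
          have e1 : Cσ * ((((2*T)⁻¹)^2 * ((ℓ⁻¹)^2 * Cσ)) * I)
              = (Cσ / (2*ℓ) * T⁻¹)^2 * I := by
            field_simp
          have e2 : (C * T ^ (-(1/3:ℝ)) * Real.sqrt I)^2
              = (C * T ^ (-(1/3:ℝ)))^2 * I := by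
            rw [mul_pow, Real.sq_sqrt hI]
          rw [e1, e2]
          exact mul_le_mul_of_nonneg_right (pow_le_pow_left₀ (by positivity) h1 2) hI
  refine ⟨C, hC, fun d hd ψ hψm hψℓ hψL => ⟨main d hd ψ hψm hψℓ hψL, ?_⟩⟩
  intro d hd ψ hψm hψℓ hψL ε hε
  refine ⟨max 1 ((C/ε)^3), fun T hT f hf hInt hI1 => ?_⟩
  have hT1 : (1:ℝ) ≤ T := le_trans (le_max_left _ _) hT
  have hT0 : (0:ℝ) < T := lt_of_lt_of_le one_pos hT1
  have hTC : (C/ε)^3 ≤ T := le_trans (le_max_right _ _) hT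
  refine (main d hd ψ hψm hψℓ hψL f hf hInt T hT1).trans (ENNReal.ofReal_le_ofReal ?_)
  set I : ℝ := ∫ x : ℝ × EuclideanSpace ℝ (Fin (d-1)), (1 + x.1^2) ^ σ * ‖f x‖^2 with hIdef
  have hI : 0 ≤ I := integral_nonneg fun x => by positivity
  have hs : Real.sqrt I ≤ 1 := by
    rw [show (1:ℝ) = Real.sqrt 1 by simp]
    exact Real.sqrt_le_sqrt hI1
  have h2 : C * T ^ (-(1/3:ℝ)) ≤ ε := by
    have hCe : (0:ℝ) < C/ε := div_pos hC hε
    have k1 : C/ε ≤ T ^ ((1/3:ℝ)) := by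
      have : ((C/ε)^3) ^ ((1/3:ℝ)) ≤ T ^ ((1/3:ℝ)) :=
        Real.rpow_le_rpow (by positivity) hTC (by norm_num)
      calc C/ε = ((C/ε)^3) ^ ((1/3:ℝ)) := by
            rw [← Real.rpow_natCast (C/ε) 3, ← Real.rpow_mul hCe.le]
            norm_num
        _ ≤ T ^ ((1/3:ℝ)) := this
    have k2 : T ^ (-(1/3:ℝ)) ≤ (C/ε)⁻¹ := by
      rw [Real.rpow_neg hT0.le]
      exact inv_anti₀ hCe k1
    calc C * T ^ (-(1/3:ℝ)) ≤ C * (C/ε)⁻¹ :=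
          mul_le_mul_of_nonneg_left k2 hC.le
      _ = ε := by field_simp
  have h3 : C * T ^ (-(1/3:ℝ)) * Real.sqrt I ≤ ε := by
    have := mul_le_mul h2 hs (Real.sqrt_nonneg _) hε.le
    simpa using this
  exact pow_le_pow_left₀ (by positivity) h3 2
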